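/- Let p be a probability distribution on Fin n, let 0 < α < 1, and let 0 < ε < 1. Then H_0(p) ≥ H_α(p), and there exists a subnormalized distribution p' obtained from p by setting some entries to zero, with ∑ i, (p i − p' i) ≤ ε (in particular ‖p − p'‖ ≤ ε), such that H_α(p) ≥ H_0(p') − (log(1/ε))/(1−α), where H_0(p') := log |{i : p' i > 0}|. -/

import Mathlib

open scoped BigOperators ENNReal Classical

noncomputable section

/-- A probability distribution on a finite type. -/
def IsProb {ι : Type*} [Fintype ι] (p : ι → ℝ) : Prop :=
  (∀ i, 0 ≤ p i) ∧ ∑ i, p i = 1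

/-- Total variation distance between two vectors. -/
def tvDist {ι : Type*} [Fintype ι] (p q : ι → ℝ) : ℝ := (1 / 2) * ∑ i, |p i - q i|

/-- The Rényi entropy `H_α` for finite real `α` (with the separate formula at `α = 1`). -/
def renyiH {ι : Type*} [Fintype ι] (α : ℝ) (p : ι → ℝ) : ℝ :=
  if α = 1 then - ∑ i, p i * Real.log (p i)
  else Real.sign α / (1 - α) * Real.log (∑ i, p i ^ α)

/-- `H_0`: logarithm of the number of nonzero components. -/
def H0 {ι : Type*} [Fintype ι] (p : ι → ℝ) : ℝ :=
  Real.log ((Finset.univ.filter (fun i => p i ≠ 0)).card)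

/-- `H_0(p) ≥ H_α(p)` for `0 < α < 1`, and there is a smoothing `p'`
of `p`, obtained by setting some entries to zero and with total mass removed at most
`ε`, such that `H_α(p) ≥ H_0(p') - log(1/ε)/(1-α)`. -/
theorem renyi_entropy_smoothing {n : ℕ} (p : Fin n → ℝ) (hp : IsProb p)
    (α ε : ℝ) (hα0 : 0 < α) (hα1 : α < 1) (hε0 : 0 < ε) (hε1 : ε < 1) :
    renyiH α p ≤ H0 p ∧
    ∃ p' : Fin n → ℝ, (∀ i, p' i = p i ∨ p' i = 0) ∧
      (∑ i, (p i - p' i)) ≤ ε ∧ tvDist p p' ≤ ε ∧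
      H0 p' - Real.log (1 / ε) / (1 - α) ≤ renyiH α p := by
  obtain ⟨hp0, hp1⟩ := hp
  have h1α : (0:ℝ) < 1 - α := by linarith
  have hαne : α ≠ 1 := ne_of_lt hα1
  have hple : ∀ i, p i ≤ 1 := by
    intro i
    calc p i ≤ ∑ j, p j := Finset.single_le_sum (fun j _ => hp0 j) (Finset.mem_univ i)
      _ = 1 := hp1
  set A := ∑ i, p i ^ α with hA
  have hA1 : 1 ≤ A := by
    rw [← hp1]
    apply Finset.sum_le_sum
    intro i _
    rcases eq_or_lt_of_le (hp0 i) with h | h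
    · rw [← h, Real.zero_rpow (ne_of_gt hα0)]
    · calc p i = p i ^ (1:ℝ) := (Real.rpow_one _).symm
        _ ≤ p i ^ α := Real.rpow_le_rpow_of_exponent_ge h (hple i) (le_of_lt hα1)
  have hA0 : 0 < A := lt_of_lt_of_le one_pos hA1
  have hrenyi : renyiH α p = Real.log A / (1 - α) := by
    rw [renyiH, if_neg hαne, Real.sign_of_pos hα0, ← hA]
    ring
  set S := Finset.univ.filter (fun i => p i ≠ 0) with hS
  set N := S.card with hN
  have hsumS : ∑ i ∈ S, p i = 1 := by
    rw [← hp1]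
    exact Finset.sum_filter_ne_zero _
  have hSne : S.Nonempty := by
    by_contra h
    rw [Finset.not_nonempty_iff_eq_empty] at h
    rw [h, Finset.sum_empty] at hsumS
    norm_num at hsumS
  have hNpos : (0:ℝ) < N := by
    have := Finset.card_pos.mpr hSne
    exact_mod_cast this
  have hAS : ∑ i ∈ S, p i ^ α = A := by
    apply Finset.sum_subset (Finset.filter_subset _ _)
    intro i _ hi
    simp only [hS, Finset.mem_filter, Finset.mem_univ, true_and, not_not] at hi
    rw [hi, Real.zero_rpow (ne_of_gt hα0)]
  -- Jensen
  have hjensen : A ≤ (N:ℝ) ^ (1 - α) := by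
    have key := Real.arith_mean_le_rpow_mean S (fun _ => 1 / (N:ℝ)) (fun i => p i ^ α)
      (fun i _ => by positivity) (by
        simp [Finset.sum_const, hN]
        field_simp)
      (fun i _ => Real.rpow_nonneg (hp0 i) α) (p := 1/α)
      (by rw [le_div_iff₀ hα0]; linarith)
    have heq1 : ∀ i ∈ S, 1 / (N:ℝ) * (p i ^ α) ^ (1/α) = 1 / (N:ℝ) * p i := by
      intro i _
      rw [← Real.rpow_mul (hp0 i), mul_one_div_cancel (ne_of_gt hα0), Real.rpow_one]
    rw [Finset.sum_congr rfl heq1, ← Finset.mul_sum, ← Finset.mul_sum, hsumS, hAS, mul_one,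
      one_div_one_div] at key
    calc A = (N:ℝ) * (1 / (N:ℝ) * A) := by field_simp
      _ ≤ (N:ℝ) * (1 / (N:ℝ)) ^ α := by
          exact mul_le_mul_of_nonneg_left key (le_of_lt hNpos)
      _ = (N:ℝ) ^ (1 - α) := by
          rw [one_div, Real.inv_rpow (le_of_lt hNpos), Real.rpow_sub hNpos, Real.rpow_one]
          ring
  have part1 : renyiH α p ≤ H0 p := by
    rw [hrenyi]
    have h1 : Real.log A ≤ Real.log ((N:ℝ) ^ (1 - α)) := Real.log_le_log hA0 hjensen
    rw [Real.log_rpow hNpos] at h1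
    have : Real.log A / (1 - α) ≤ Real.log N := by
      rw [div_le_iff₀ h1α]; linarith
    simpa [H0, ← hS, ← hN] using this
  refine ⟨part1, ?_⟩
  -- smoothing
  set c := (ε / A) ^ (1 / (1 - α)) with hc
  have hεA : 0 < ε / A := div_pos hε0 hA0
  have hcpos : 0 < c := Real.rpow_pos_of_pos hεA _
  have hcpow : c ^ (1 - α) = ε / A := by
    rw [hc, ← Real.rpow_mul (le_of_lt hεA), one_div_mul_cancel (ne_of_gt h1α), Real.rpow_one]
  set p' : Fin n → ℝ := fun i => if c ≤ p i then p i else 0 with hp'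
  have hp'le : ∀ i, p' i ≤ p i := by
    intro i; rw [hp']; dsimp only; split <;> [exact le_refl _; exact hp0 i]
  have hkey : ∀ i, p i - p' i ≤ ε / A * p i ^ α := by
    intro i
    rw [hp']; dsimp only
    split
    · simp only [sub_self]
      exact mul_nonneg (le_of_lt hεA) (Real.rpow_nonneg (hp0 i) α)
    · next h =>
      push_neg at h
      rcases eq_or_lt_of_le (hp0 i) with h0 | h0
      · rw [← h0]; simp [Real.zero_rpow (ne_of_gt hα0)]
      · rw [sub_zero]
        calc p i = p i ^ α * p i ^ (1 - α) := by
              rw [← Real.rpow_add h0]; simp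
          _ ≤ p i ^ α * c ^ (1 - α) := by
              apply mul_le_mul_of_nonneg_left _ (Real.rpow_nonneg (hp0 i) α)
              exact Real.rpow_le_rpow (hp0 i) (le_of_lt h) (le_of_lt h1α)
          _ = ε / A * p i ^ α := by rw [hcpow]; ring
  have hmass : ∑ i, (p i - p' i) ≤ ε := by
    calc ∑ i, (p i - p' i) ≤ ∑ i, ε / A * p i ^ α := Finset.sum_le_sum fun i _ => hkey i
      _ = ε / A * A := by rw [← Finset.mul_sum]
      _ = ε := div_mul_cancel₀ ε (ne_of_gt hA0)
  have hmass0 : 0 ≤ ∑ i, (p i - p' i) :=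
    Finset.sum_nonneg fun i _ => sub_nonneg.mpr (hp'le i)
  have htv : tvDist p p' ≤ ε := by
    rw [tvDist]
    have : ∑ i, |p i - p' i| = ∑ i, (p i - p' i) := by
      apply Finset.sum_congr rfl
      intro i _
      exact abs_of_nonneg (sub_nonneg.mpr (hp'le i))
    rw [this]
    linarith
  refine ⟨p', fun i => by rw [hp']; dsimp only; split <;> simp, hmass, htv, ?_⟩
  -- entropy bound
  set T := Finset.univ.filter (fun i => p' i ≠ 0) with hT
  set M := T.card with hM
  have hlogε : Real.log ε < 0 := Real.log_neg hε0 hε1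
  have hlogA : 0 ≤ Real.log A := Real.log_nonneg hA1
  have hlog1ε : Real.log (1 / ε) = -Real.log ε := by
    rw [one_div, Real.log_inv]
  have hH0 : H0 p' = Real.log M := by rw [H0, ← hT, ← hM]
  rcases Nat.eq_zero_or_pos M with hM0 | hMpos
  · rw [hH0, hM0]
    simp only [Nat.cast_zero, Real.log_zero]
    rw [hrenyi]
    have : 0 ≤ Real.log (1/ε) := by rw [hlog1ε]; linarith
    have h2 : 0 ≤ Real.log A / (1 - α) := div_nonneg hlogA (le_of_lt h1α)
    have h3 : 0 ≤ Real.log (1/ε) / (1-α) := div_nonneg this (le_of_lt h1α)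
    linarith
  · have hcT : ∀ i ∈ T, c ≤ p i := by
      intro i hi
      simp only [hT, Finset.mem_filter, Finset.mem_univ, true_and, hp'] at hi
      by_contra h
      exact hi (if_neg h)
    have hMc : (M:ℝ) * c ^ α ≤ A := by
      calc (M:ℝ) * c ^ α = ∑ _i ∈ T, c ^ α := by rw [Finset.sum_const, nsmul_eq_mul]
        _ ≤ ∑ i ∈ T, p i ^ α := Finset.sum_le_sum fun i hi =>
            Real.rpow_le_rpow (le_of_lt hcpos) (hcT i hi) (le_of_lt hα0)
        _ ≤ A := Finset.sum_le_sum_of_subset_of_nonneg (Finset.subset_univ T)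
            (fun i _ _ => Real.rpow_nonneg (hp0 i) α)
    have hcα : (0:ℝ) < c ^ α := Real.rpow_pos_of_pos hcpos α
    have hMle : (M:ℝ) ≤ A / c ^ α := (le_div_iff₀ hcα).mpr hMc
    have hMreal : (0:ℝ) < M := by exact_mod_cast hMpos
    have hlogM : Real.log M ≤ Real.log A - α * Real.log c := by
      calc Real.log M ≤ Real.log (A / c ^ α) := Real.log_le_log hMreal hMle
        _ = Real.log A - α * Real.log c := by
            rw [Real.log_div (ne_of_gt hA0) (ne_of_gt hcα), Real.log_rpow hcpos]
    have hlogc : Real.log c = (Real.log ε - Real.log A) / (1 - α) := by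
      rw [hc, Real.log_rpow hεA, Real.log_div (ne_of_gt hε0) (ne_of_gt hA0)]
      ring
    rw [hH0, hrenyi, hlog1ε]
    rw [hlogc] at hlogM
    have e1 : α * ((Real.log ε - Real.log A) / (1 - α)) * (1 - α)
        = α * (Real.log ε - Real.log A) := by field_simp
    have e2 : (1 - α) * Real.log ε ≤ 0 :=
      mul_nonpos_of_nonneg_of_nonpos (le_of_lt h1α) (le_of_lt hlogε)
    rw [sub_le_iff_le_add, ← add_div, le_div_iff₀ h1α]
    nlinarith [mul_le_mul_of_nonneg_right hlogM (le_of_lt h1α)]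

end
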